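/- Let n be a positive even integer, N = n/2, and let b be the ℚ/ℤ-valued symmetric bilinear form on ℤ/Nℤ given by b(x̄,ȳ) = 2xy/n mod ℤ (the discriminant bilinear form of the rank-one lattice ⟨n/2⟩). Then there exists a group automorphism g of ℤ/Nℤ with b(g(x),g(y)) = −b(x,y) for all x,y (i.e. b ≅ −b) if and only if n = 2^ε·p₁^{α₁}···p_m^{α_m} with ε ∈ {1,2} and every p_i a prime with p_i ≡ 1 mod 4; equivalently, if and only if there exists u ∈ ℤ/Nℤ with u² = −1. -/

import Mathlib

open Matrix

/-- An integral lattice: a free `ℤ`-module `Fin rank → ℤ` equipped with a symmetric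
integer Gram matrix. -/
structure IntLattice where
  rank : ℕ
  gram : Matrix (Fin rank) (Fin rank) ℤ
  symm : gram.IsSymm

namespace IntLattice

/-- The bilinear form of the lattice. -/
def bilin (L : IntLattice) (x y : Fin L.rank → ℤ) : ℤ := x ⬝ᵥ (L.gram *ᵥ y)

lemma gram_symm_apply (L : IntLattice) (i j : Fin L.rank) : L.gram j i = L.gram i j :=
  congrFun (congrFun L.symm i) j

lemma bilin_comm (L : IntLattice) (x y : Fin L.rank → ℤ) :
    L.bilin x y = L.bilin y x := by
  simp only [bilin, dotProduct, mulVec, Finset.mul_sum]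
  rw [Finset.sum_comm]
  exact Finset.sum_congr rfl fun j _ => Finset.sum_congr rfl fun i _ => by
    rw [L.gram_symm_apply i j]; ring

/-- The lattice is even: all norms are even. -/
def IsEven (L : IntLattice) : Prop := ∀ x, 2 ∣ L.bilin x x

/-- The lattice is unimodular: the Gram matrix has determinant `±1`, equivalently the
map `L → Hom(L,ℤ)` is bijective. -/
def IsUnimodular (L : IntLattice) : Prop := IsUnit L.gram.det

/-- Positive definite lattice. -/
def PosDef (L : IntLattice) : Prop := ∀ x, x ≠ 0 → 0 < L.bilin x x

/-- The real quadratic form of the lattice has `p` positive and `q` negative squares. -/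
def HasSignature (L : IntLattice) (p q : ℕ) : Prop :=
  L.rank = p + q ∧
  ∃ Q : Matrix (Fin L.rank) (Fin L.rank) ℝ, IsUnit Q.det ∧
    Qᵀ * (L.gram.map ((↑) : ℤ → ℝ)) * Q =
      Matrix.diagonal (fun i : Fin L.rank => if (i : ℕ) < p then (1 : ℝ) else -1)

/-- The rational extension of the bilinear form. -/
def qbilin (L : IntLattice) (x y : Fin L.rank → ℚ) : ℚ :=
  x ⬝ᵥ ((L.gram.map ((↑) : ℤ → ℚ)) *ᵥ y)

end IntLattice

def castVec {N : ℕ} (x : Fin N → ℤ) : Fin N → ℚ := fun i => (x i : ℚ)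

def castHom (N : ℕ) : (Fin N → ℤ) →+ (Fin N → ℚ) where
  toFun := castVec
  map_zero' := by funext i; simp [castVec]
  map_add' a b := by funext i; simp [castVec]

namespace IntLattice

/-- The dual lattice `L∨ = {x ∈ L⊗ℚ : ⟨x,L⟩ ⊆ ℤ}`, as an additive subgroup of `ℚ^rank`. -/
def dualSub (L : IntLattice) : AddSubgroup (Fin L.rank → ℚ) where
  carrier := {x | ∀ y : Fin L.rank → ℤ, ∃ m : ℤ, L.qbilin x (castVec y) = m}
  add_mem' := by
    intro a b ha hb y
    obtain ⟨m, hm⟩ := ha y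
    obtain ⟨m', hm'⟩ := hb y
    refine ⟨m + m', ?_⟩
    simp only [qbilin, add_dotProduct] at *
    rw [hm, hm']; push_cast; ring
  zero_mem' := by
    intro y
    exact ⟨0, by simp [qbilin]⟩
  neg_mem' := by
    intro a ha y
    obtain ⟨m, hm⟩ := ha y
    refine ⟨-m, ?_⟩
    simp only [qbilin, neg_dotProduct] at *
    rw [hm]; push_cast; ring

/-- The image of `L` inside `L⊗ℚ`. -/
def latticeIn (L : IntLattice) : AddSubgroup (Fin L.rank → ℚ) := (castHom L.rank).range

/-- The discriminant group `A_L = L∨/L`. -/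
abbrev discGroup (L : IntLattice) : Type :=
  ↥(L.dualSub) ⧸ (L.latticeIn).addSubgroupOf L.dualSub

/-- Projection from the dual lattice to the discriminant group. -/
def dmk (L : IntLattice) : L.dualSub → L.discGroup := QuotientAddGroup.mk

/-- `g : A_M → A_N` carries the discriminant quadratic form `q_M` to `q_N`
(values in `ℚ/2ℤ`). -/
def QFormIso (M N : IntLattice) (g : M.discGroup ≃+ N.discGroup) : Prop :=
  ∀ x : M.dualSub, ∃ y : N.dualSub,
    N.dmk y = g (M.dmk x) ∧ ∃ m : ℤ, N.qbilin ↑y ↑y - M.qbilin ↑x ↑x = 2 * (m : ℚ)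

/-- `g : A_M → A_N` carries the discriminant quadratic form `q_M` to `-q_N`. -/
def QFormIsoNeg (M N : IntLattice) (g : M.discGroup ≃+ N.discGroup) : Prop :=
  ∀ x : M.dualSub, ∃ y : N.dualSub,
    N.dmk y = g (M.dmk x) ∧ ∃ m : ℤ, N.qbilin ↑y ↑y + M.qbilin ↑x ↑x = 2 * (m : ℚ)

/-- The integer matrix `F` defines an isometry `M → N` of lattices (`x ↦ F *ᵥ x`). -/
def MatIsometry (M N : IntLattice) (F : Matrix (Fin N.rank) (Fin M.rank) ℤ) : Prop :=
  (∃ F' : Matrix (Fin M.rank) (Fin N.rank) ℤ, F * F' = 1 ∧ F' * F = 1) ∧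
  Fᵀ * N.gram * F = M.gram

/-- The lattices `M` and `N` are isometric. -/
def Isometric (M N : IntLattice) : Prop := ∃ F, MatIsometry M N F

end IntLattice

/-- The rows of `B` form a `ℤ`-basis of the submodule `S`. -/
def IsBasisOf {N : ℕ} (S : Submodule ℤ (Fin N → ℤ)) {r : ℕ}
    (B : Matrix (Fin r) (Fin N) ℤ) : Prop :=
  (∀ i, B i ∈ S) ∧ ∀ x ∈ S, ∃! c : Fin r → ℤ, x = Matrix.vecMul c B

namespace IntLattice

/-- Gram matrix of the vectors given by the rows of `B`. -/
def gramOf (L : IntLattice) {r : ℕ} (B : Matrix (Fin r) (Fin L.rank) ℤ) :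
    Matrix (Fin r) (Fin r) ℤ := Matrix.of fun i j => L.bilin (B i) (B j)

lemma gramOf_isSymm (L : IntLattice) {r : ℕ} (B : Matrix (Fin r) (Fin L.rank) ℤ) :
    (L.gramOf B).IsSymm := by
  unfold Matrix.IsSymm
  ext i j
  simp only [transpose_apply, gramOf, Matrix.of_apply]
  exact L.bilin_comm _ _

/-- The sublattice of `L` spanned by the rows of `B`, as an abstract lattice. -/
def sub (L : IntLattice) {r : ℕ} (B : Matrix (Fin r) (Fin L.rank) ℤ) : IntLattice :=
  ⟨r, L.gramOf B, L.gramOf_isSymm B⟩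

/-- `M(1/2)`: the same module with the form divided by two. -/
abbrev halfL (M : IntLattice) : IntLattice :=
  ⟨M.rank, M.gram.map (fun z => z / 2), M.symm.map _⟩

end IntLattice

/-- Orthogonal direct sum of Gram matrices. -/
def dsumGram {m k : ℕ} (A : Matrix (Fin m) (Fin m) ℤ) (B : Matrix (Fin k) (Fin k) ℤ) :
    Matrix (Fin (m + k)) (Fin (m + k)) ℤ :=
  Matrix.of fun i j =>
    if hi : (i : ℕ) < m then
      if hj : (j : ℕ) < m then A ⟨i, hi⟩ ⟨j, hj⟩ else 0
    else
      if hj : (j : ℕ) < m then 0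
      else B ⟨(i : ℕ) - m, by omega⟩ ⟨(j : ℕ) - m, by omega⟩

lemma dsumGram_isSymm {m k : ℕ} {A : Matrix (Fin m) (Fin m) ℤ}
    {B : Matrix (Fin k) (Fin k) ℤ} (hA : A.IsSymm) (hB : B.IsSymm) :
    (dsumGram A B).IsSymm := by
  unfold Matrix.IsSymm
  ext i j
  simp only [transpose_apply, dsumGram, Matrix.of_apply]
  have hA' : ∀ a b, A b a = A a b := fun a b => congrFun (congrFun hA a) b
  have hB' : ∀ a b, B b a = B a b := fun a b => congrFun (congrFun hB a) b
  by_cases hi : (i : ℕ) < m <;> by_cases hj : (j : ℕ) < m <;> simp [hi, hj]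
  · exact hA' _ _
  · exact hB' _ _

/-- Orthogonal direct sum of lattices. -/
def IntLattice.dsum (M N : IntLattice) : IntLattice :=
  ⟨M.rank + N.rank, dsumGram M.gram N.gram, dsumGram_isSymm M.symm N.symm⟩

/-- The lattice with diagonal Gram matrix `diag d`. -/
def diagL {r : ℕ} (d : Fin r → ℤ) : IntLattice :=
  ⟨r, Matrix.diagonal d, Matrix.isSymm_diagonal d⟩

/-- The hyperbolic plane `U`. -/
def UL : IntLattice := ⟨2, Matrix.of !![0, 1; 1, 0], by decide⟩

/-- The negative definite even unimodular lattice `E₈` (negative of the `E₈` Cartan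
matrix; node `0` is the branch node with arms `1`, `2-3`, `4-5-6-7`). -/
def E8L : IntLattice :=
  ⟨8, !![-2,  1,  1,  0,  1,  0,  0,  0;
          1, -2,  0,  0,  0,  0,  0,  0;
          1,  0, -2,  1,  0,  0,  0,  0;
          0,  0,  1, -2,  0,  0,  0,  0;
          1,  0,  0,  0, -2,  1,  0,  0;
          0,  0,  0,  0,  1, -2,  1,  0;
          0,  0,  0,  0,  0,  1, -2,  1;
          0,  0,  0,  0,  0,  0,  1, -2], by decide⟩

/-- The rank-two lattice with Gram matrix `[[a,b],[b,d]]`. -/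
def sym2L (a b d : ℤ) : IntLattice :=
  ⟨2, !![a, b; b, d], by
    unfold Matrix.IsSymm
    ext i j
    fin_cases i <;> fin_cases j <;> simp⟩

/-- The `ε`-eigenspace of an involution `φ`. -/
def eigenSub {n : ℕ} (φ : (Fin n → ℤ) ≃ₗ[ℤ] (Fin n → ℤ)) (ε : ℤ) :
    Submodule ℤ (Fin n → ℤ) where
  carrier := {x | φ x = ε • x}
  add_mem' := by
    intro a b ha hb
    simp only [Set.mem_setOf_eq] at *
    rw [map_add, ha, hb, smul_add]
  zero_mem' := by simp
  smul_mem' := by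
    intro c x hx
    simp only [Set.mem_setOf_eq] at *
    rw [_root_.map_smul, hx, smul_comm]

/-- The orthogonal complement of a set of vectors in `L`. -/
def perpOfSet (L : IntLattice) (S : Set (Fin L.rank → ℤ)) :
    Submodule ℤ (Fin L.rank → ℤ) where
  carrier := {x | ∀ s ∈ S, L.bilin x s = 0}
  add_mem' := by
    intro a b ha hb s hs
    have ha' := ha s hs
    have hb' := hb s hs
    simp only [IntLattice.bilin] at ha' hb' ⊢
    rw [add_dotProduct, ha', hb', add_zero]
  zero_mem' := by
    intro s hs
    simp [IntLattice.bilin]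
  smul_mem' := by
    intro c x hx s hs
    have hx' := hx s hs
    simp only [IntLattice.bilin] at hx' ⊢
    rw [smul_dotProduct, hx', smul_zero]

/-- `P` is a primitive lattice vector. -/
def Primitive {n : ℕ} (P : Fin n → ℤ) : Prop :=
  P ≠ 0 ∧ ∀ (m : ℤ) (y : Fin n → ℤ), P = m • y → IsUnit m

/-- An integral polarized K3 involution `(L, φ, P′)`: `L` is an even unimodular lattice
of signature `(3,19)`, `φ` a form-preserving involution with hyperbolic fixed lattice,
and `P′` a polarization with `φ(P′) = -P′` and `(P′)² > 0`. -/
structure K3Inv where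
  L : IntLattice
  even : L.IsEven
  unimod : L.IsUnimodular
  sig : L.HasSignature 3 19
  φ : (Fin L.rank → ℤ) ≃ₗ[ℤ] (Fin L.rank → ℤ)
  φ_isom : ∀ x y, L.bilin (φ x) (φ y) = L.bilin x y
  φ_invol : ∀ x, φ (φ x) = x
  P' : Fin L.rank → ℤ
  φP' : φ P' = -P'
  P'pos : 0 < L.bilin P' P'
  fixed_hyp : ∃ (r : ℕ) (B : Matrix (Fin r) (Fin L.rank) ℤ),
    IsBasisOf (eigenSub φ 1) B ∧ (L.sub B).HasSignature 1 (r - 1)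

/-- Isomorphism of integral polarized K3 involutions. -/
def K3Iso (K K' : K3Inv) : Prop :=
  ∃ f : (Fin K.L.rank → ℤ) ≃ₗ[ℤ] (Fin K'.L.rank → ℤ),
    (∀ x y, K'.L.bilin (f x) (f y) = K.L.bilin x y) ∧
    f K.P' = K'.P' ∧
    ∀ x, K'.φ (f x) = f (K.φ x)

/-- `(L,φ,P′)` has genus invariants `(r, a, δ_φ; k, n, δ_P, δ_{φP})`. -/
def HasGenusInvariants (K : K3Inv) (r a δφ k : ℕ) (n : ℤ) (δP δφP : ℕ) : Prop :=
  (δφ = 0 ∨ δφ = 1) ∧ (δP = 0 ∨ δP = 1) ∧ (δφP = 0 ∨ δφP = 1) ∧ 1 ≤ k ∧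
  (∃ B : Matrix (Fin r) (Fin K.L.rank) ℤ,
      IsBasisOf (eigenSub K.φ 1) B ∧
      Nonempty ((K.L.sub B).discGroup ≃+ (Fin a → ZMod 2))) ∧
  (δφ = 0 ↔ ∀ x, 2 ∣ K.L.bilin x (K.φ x)) ∧
  ∃ P : Fin K.L.rank → ℤ, Primitive P ∧ K.P' = (k : ℤ) • P ∧ n = K.L.bilin P P ∧
    (δP = 0 ↔ ∀ y ∈ eigenSub K.φ (-1), 2 ∣ K.L.bilin P y) ∧
    (δφP = 0 ↔ ∀ x, 2 ∣ (K.L.bilin x (K.φ x) - K.L.bilin x P))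

/-- Two even lattices belong to the same genus: equal signatures over `ℝ` and
isomorphic discriminant quadratic forms. -/
def SameGenus (M N : IntLattice) : Prop :=
  (∃ p q, M.HasSignature p q ∧ N.HasSignature p q) ∧
  ∃ g : M.discGroup ≃+ N.discGroup, IntLattice.QFormIso M N g

/-- The `p`-primary part of an abelian group. -/
def primaryPart (p : ℕ) (G : Type*) [AddCommGroup G] : AddSubgroup G where
  carrier := {x | ∃ j : ℕ, p ^ j • x = 0}
  add_mem' := by
    rintro a b ⟨j, hj⟩ ⟨l, hl⟩
    refine ⟨j + l, ?_⟩
    rw [smul_add]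
    have h1 : p ^ (j + l) • a = 0 := by rw [pow_add, mul_comm, ← smul_smul, hj, smul_zero]
    have h2 : p ^ (j + l) • b = 0 := by rw [pow_add, ← smul_smul, hl, smul_zero]
    rw [h1, h2, add_zero]
  zero_mem' := ⟨0, smul_zero _⟩
  neg_mem' := by
    rintro a ⟨j, hj⟩
    exact ⟨j, by rw [smul_neg, hj, neg_zero]⟩

/-- A pair `(M, τ)`: an even lattice `M` in the genus of the reference lattice `R`
together with an isomorphism `τ : q_M → q_R` of discriminant quadratic forms. -/
structure QPairR (R : IntLattice) where
  M : IntLattice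
  even : M.IsEven
  genus : SameGenus M R
  τ : M.discGroup ≃+ R.discGroup
  hτ : IntLattice.QFormIso M R τ

/-- Equivalence of pairs: `(M,τ) ∼ (M̃,τ̃)` iff there is an isometry `f : M → M̃`
with `τ = τ̃ ∘ f̄`, where `f̄` is the induced map on discriminant groups. -/
def QPairREquiv {R : IntLattice} (p p' : QPairR R) : Prop :=
  ∃ F : Matrix (Fin p'.M.rank) (Fin p.M.rank) ℤ,
    IntLattice.MatIsometry p.M p'.M F ∧
    ∀ (x : p.M.dualSub) (y : p'.M.dualSub),
      (y : Fin p'.M.rank → ℚ) = (F.map ((↑) : ℤ → ℚ)) *ᵥ (x : Fin p.M.rank → ℚ) →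
      p.τ (p.M.dmk x) = p'.τ (p'.M.dmk y)

/-- `τ` is an isomorphism from the discriminant bilinear form of `M(1/2)` to the
standard form `b_{⟨-n/2⟩}` on `ℤ/(n/2)`, which sends `(x̄,ȳ)` to `-2xy/n mod ℤ`. -/
def BIsoStd (M : IntLattice) (n : ℤ) (τ : (M.halfL).discGroup ≃+ ZMod (n / 2).toNat) :
    Prop :=
  ∀ (x y : (M.halfL).dualSub) (α β : ℤ),
    ((α : ZMod (n / 2).toNat) = τ ((M.halfL).dmk x)) →
    ((β : ZMod (n / 2).toNat) = τ ((M.halfL).dmk y)) →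
    ∃ m : ℤ, (M.halfL).qbilin ↑x ↑y + (2 * α * β : ℚ) / (n : ℚ) = (m : ℚ)

/-- A pair `(M, τ)`: an even lattice `M` in the genus of the reference lattice `R`
together with an isomorphism `τ : b_{M(1/2)} → b_{⟨-n/2⟩}` of discriminant bilinear
forms. -/
structure BPairR (R : IntLattice) (n : ℤ) where
  M : IntLattice
  even : M.IsEven
  genus : SameGenus M R
  τ : (M.halfL).discGroup ≃+ ZMod (n / 2).toNat
  hτ : BIsoStd M n τ

/-- Equivalence of pairs `(M,τ) ∼ (M̃,τ̃)`: there is an isometry `f : M → M̃` with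
`τ = τ̃ ∘ f̄`. -/
def BPairREquiv {R : IntLattice} {n : ℤ} (p p' : BPairR R n) : Prop :=
  ∃ F : Matrix (Fin p'.M.rank) (Fin p.M.rank) ℤ,
    IntLattice.MatIsometry p.M p'.M F ∧
    ∀ (x : (p.M.halfL).dualSub) (y : (p'.M.halfL).dualSub),
      (y : Fin p'.M.rank → ℚ) = (F.map ((↑) : ℤ → ℚ)) *ᵥ (x : Fin p.M.rank → ℚ) →
      p.τ ((p.M.halfL).dmk x) = p'.τ ((p'.M.halfL).dmk y)

/-- `g` is an isomorphism `b_{⟨n/2⟩} → -b_{⟨n/2⟩}` of finite bilinear forms on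
`ℤ/(n/2)`, where `b_{⟨n/2⟩}(x̄,ȳ) = 2xy/n mod ℤ`. -/
def NegBIso (n : ℤ) (g : ZMod (n / 2).toNat ≃+ ZMod (n / 2).toNat) : Prop :=
  ∀ x y x' y' : ℤ,
    ((x' : ZMod (n / 2).toNat) = g ((x : ℤ) : ZMod (n / 2).toNat)) →
    ((y' : ZMod (n / 2).toNat) = g ((y : ℤ) : ZMod (n / 2).toNat)) →
    n ∣ 2 * (x' * y' + x * y)

/-- `g` preserves the restriction to the 2-primary part of the discriminant quadratic
form `q(x̄,ȳ) = x²/2 - y²/n mod 2ℤ` of `⟨2⟩⊕⟨-n⟩` on `ℤ/2 × ℤ/n`. -/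
def QPres2 (n : ℤ)
    (g : primaryPart 2 (ZMod 2 × ZMod n.toNat) ≃+ primaryPart 2 (ZMod 2 × ZMod n.toNat)) :
    Prop :=
  ∀ (x : primaryPart 2 (ZMod 2 × ZMod n.toNat)) (α β α' β' : ℤ),
    ((α : ZMod 2) = (x : ZMod 2 × ZMod n.toNat).1) →
    ((β : ZMod n.toNat) = (x : ZMod 2 × ZMod n.toNat).2) →
    ((α' : ZMod 2) = ((g x : primaryPart 2 (ZMod 2 × ZMod n.toNat)) : ZMod 2 × ZMod n.toNat).1) →
    ((β' : ZMod n.toNat) = ((g x : primaryPart 2 (ZMod 2 × ZMod n.toNat)) : ZMod 2 × ZMod n.toNat).2) →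
    (4 * n) ∣ (n * (α' ^ 2 - α ^ 2) - 2 * (β' ^ 2 - β ^ 2))

/-- `g` preserves the restriction to the 2-primary part of the discriminant bilinear
form `b(x̄,ȳ) = -2xy/n mod ℤ` of `⟨-n/2⟩` on `ℤ/(n/2)`. -/
def BPres2 (n : ℤ)
    (g : primaryPart 2 (ZMod (n / 2).toNat) ≃+ primaryPart 2 (ZMod (n / 2).toNat)) :
    Prop :=
  ∀ (x y : primaryPart 2 (ZMod (n / 2).toNat)) (α β α' β' : ℤ),
    ((α : ZMod (n / 2).toNat) = (x : ZMod (n / 2).toNat)) →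
    ((β : ZMod (n / 2).toNat) = (y : ZMod (n / 2).toNat)) →
    ((α' : ZMod (n / 2).toNat) = ((g x : primaryPart 2 (ZMod (n / 2).toNat)) : ZMod (n / 2).toNat)) →
    ((β' : ZMod (n / 2).toNat) = ((g y : primaryPart 2 (ZMod (n / 2).toNat)) : ZMod (n / 2).toNat)) →
    n ∣ 2 * (α' * β' - α * β)


/-- Hensel-type lifting: if `-1` is a square mod an odd prime `p`, it is a square
mod every power `p^k` (integer version). -/
lemma aux_hensel {p : ℕ} (hp : p.Prime) (hp2 : p ≠ 2) (h1 : p % 4 = 1) :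
    ∀ k : ℕ, ∃ u : ℤ, (p : ℤ) ^ k ∣ u * u + 1 := by
  haveI : Fact p.Prime := ⟨hp⟩
  intro k
  induction k with
  | zero => exact ⟨0, by simp⟩
  | succ k ih =>
    rcases Nat.eq_zero_or_pos k with hk | hk
    · subst hk
      have hs : IsSquare (-1 : ZMod p) := ZMod.exists_sq_eq_neg_one_iff.mpr (by omega)
      obtain ⟨x, hx⟩ := hs
      refine ⟨(x.val : ℤ), ?_⟩
      rw [pow_one, ← ZMod.intCast_zmod_eq_zero_iff_dvd]
      push_cast
      rw [ZMod.natCast_val, ZMod.cast_id, ← hx]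
      ring
    · obtain ⟨u, c, hc⟩ := ih
      have hpu : ¬ ((p : ℤ) ∣ u) := by
        intro hdvd
        have h2 : (p : ℤ) ∣ u * u + 1 := (dvd_pow_self (p:ℤ) (by omega)).trans ⟨c, hc⟩
        have : (p : ℤ) ∣ 1 := (dvd_add_right (hdvd.mul_right u)).mp h2
        exact hp.one_lt.ne' (by exact_mod_cast Int.eq_one_of_dvd_one (by positivity) this)
      have hu0 : ((u : ZMod p)) ≠ 0 := by
        rwa [Ne, ZMod.intCast_zmod_eq_zero_iff_dvd]
      have h20 : ((2 : ZMod p)) ≠ 0 := by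
        have hnd : ¬ ((p : ℕ) ∣ 2) := fun h => hp2 ((Nat.prime_dvd_prime_iff_eq hp Nat.prime_two).mp h)
        intro h
        apply hnd
        have : ((2 : ℕ) : ZMod p) = 0 := by push_cast; exact h
        rwa [ZMod.natCast_eq_zero_iff] at this
      set t0 : ZMod p := (-(c : ZMod p)) * ((2 * u : ZMod p))⁻¹ with ht0
      have h2u : ((2 * u : ℤ) : ZMod p) ≠ 0 := by push_cast; exact mul_ne_zero h20 hu0
      refine ⟨u + (t0.val : ℤ) * (p:ℤ)^k, ?_⟩
      have hdc : (p : ℤ) ∣ c + 2 * u * (t0.val : ℤ) := by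
        rw [← ZMod.intCast_zmod_eq_zero_iff_dvd]
        push_cast
        rw [ZMod.natCast_val, ZMod.cast_id, ht0]
        field_simp
        ring
      obtain ⟨d, hd⟩ := hdc
      refine ⟨d + (t0.val : ℤ) * (t0.val : ℤ) * (p:ℤ)^(k-1), ?_⟩
      have hkk : (p:ℤ)^k * (p:ℤ)^k = (p:ℤ)^(k+1) * (p:ℤ)^(k-1) := by
        rw [← pow_add, ← pow_add]; congr 1; omega
      have : (u + (t0.val : ℤ) * (p:ℤ)^k) * (u + (t0.val : ℤ) * (p:ℤ)^k) + 1
          = (u * u + 1) + (2 * u * (t0.val:ℤ)) * (p:ℤ)^k + ((t0.val:ℤ) * (t0.val:ℤ)) * ((p:ℤ)^k * (p:ℤ)^k) := by ring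
      rw [this, hc, hkk]
      have hd' : 2 * u * (t0.val : ℤ) = (p:ℤ) * d - c := by linarith [hd]
      rw [hd']
      ring

lemma aux_neg_one_sq (N : ℕ) :
    (∃ u : ZMod N, u * u = -1) ↔
      (¬ (4 ∣ N) ∧ ∀ p : ℕ, p.Prime → p ≠ 2 → p ∣ N → p % 4 = 1) := by
  constructor
  · rintro ⟨u, hu⟩
    have hs : IsSquare (-1 : ZMod N) := ⟨u, hu.symm⟩
    constructor
    · intro h4
      have : IsSquare (-1 : ZMod 4) := ZMod.isSquare_neg_one_of_dvd h4 hs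
      revert this; decide
    · intro p hp hp2 hpN
      haveI : Fact p.Prime := ⟨hp⟩
      have h3 : p % 4 ≠ 3 := by
        obtain ⟨y, h⟩ := ZMod.isSquare_neg_one_of_dvd hpN hs
        rw [← sq, eq_comm, show (-1 : ZMod p) = -1 ^ 2 by ring] at h
        exact ZMod.mod_four_ne_three_of_sq_eq_neg_sq' one_ne_zero h
      have hodd : p % 2 = 1 := (Nat.Prime.mod_two_eq_one_iff_ne_two hp).mpr hp2
      omega
  · rintro ⟨h4, hP⟩
    suffices h : IsSquare (-1 : ZMod N) by
      obtain ⟨u, hu⟩ := h; exact ⟨u, hu.symm⟩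
    have hN0 : N ≠ 0 := fun h => h4 (h ▸ dvd_zero 4)
    induction N using Nat.strong_induction_on with
    | _ N ih =>
      rcases eq_or_ne N 1 with h1 | h1
      · subst h1; exact ⟨0, by decide⟩
      have hpf : N.minFac.Prime := Nat.minFac_prime h1
      set p := N.minFac with hpdef
      set k := N.factorization p with hkdef
      set m := N / p ^ k with hmdef
      have hNd : p ^ k ∣ N := Nat.ordProj_dvd N p
      have hNe : p ^ k * m = N := Nat.ordProj_mul_ordCompl_eq_self N p
      have hk1 : 1 ≤ k := by
        rw [hkdef]
        exact (Nat.Prime.factorization_pos_of_dvd hpf hN0 (Nat.minFac_dvd N))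
      have hco : Nat.Coprime (p ^ k) m := by
        exact Nat.Coprime.pow_left _ (Nat.coprime_ordCompl hpf hN0)
      have hm0 : m ≠ 0 := by
        intro h; rw [h, mul_zero] at hNe; exact hN0 hNe.symm
      have hmlt : m < N := by
        have : 2 ≤ p ^ k := by
          calc 2 ≤ p := hpf.two_le
          _ ≤ p ^ k := Nat.le_self_pow (by omega) p
        nlinarith [Nat.pos_of_ne_zero hm0]
      have hpk : IsSquare (-1 : ZMod (p ^ k)) := by
        rcases eq_or_ne p 2 with hp2 | hp2
        · have hk : k = 1 := by
            by_contra hk2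
            exact h4 (by
              have : p ^ 2 ∣ N := (pow_dvd_pow p (by omega)).trans hNd
              rwa [hp2] at this)
          rw [hp2, hk]
          decide
        · have h1p : p % 4 = 1 := hP p hpf hp2 (((dvd_pow_self p (by omega : k ≠ 0)).trans hNd))
          obtain ⟨u, hu⟩ := aux_hensel hpf hp2 h1p k
          refine ⟨(u : ZMod (p ^ k)), ?_⟩
          have : ((u * u + 1 : ℤ) : ZMod (p ^ k)) = 0 := by
            rw [ZMod.intCast_zmod_eq_zero_iff_dvd]
            exact_mod_cast hu
          push_cast at this
          linear_combination -this
      have hm : IsSquare (-1 : ZMod m) := by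
        refine ih m hmlt ?_ ?_ hm0
        · intro h; exact h4 (h.trans ⟨p ^ k, by rw [← hNe]; ring⟩)
        · intro q hq hq2 hqm
          exact hP q hq hq2 (hqm.trans ⟨p ^ k, by rw [← hNe]; ring⟩)
      rw [← hNe]
      exact ZMod.isSquare_neg_one_mul hco hpk hm


/-- For the discriminant bilinear form `b(x̄,ȳ) = 2xy/n` of `⟨n/2⟩`
on `ℤ/(n/2)`: `b ≅ -b` iff `n = 2^ε p₁^{α₁} ⋯ p_m^{α_m}` with `ε ∈ {1,2}` and all
`p_i ≡ 1 mod 4`, equivalently iff `-1` is a square in `ℤ/(n/2)`. -/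
theorem b_iso_neg_b_iff (n : ℤ) (hn : 0 < n) (heven : 2 ∣ n) :
    ((∃ g : ZMod (n / 2).toNat ≃+ ZMod (n / 2).toNat, NegBIso n g) ↔
      (¬ ((8 : ℤ) ∣ n) ∧ ∀ p : ℕ, p.Prime → p ≠ 2 → (p : ℤ) ∣ n → p % 4 = 1)) ∧
    ((∃ g : ZMod (n / 2).toNat ≃+ ZMod (n / 2).toNat, NegBIso n g) ↔
      (∃ u : ZMod (n / 2).toNat, u * u = -1)) := by
  set N : ℕ := (n / 2).toNat with hNdef
  have hNZ : (N : ℤ) = n / 2 := Int.toNat_of_nonneg (by omega)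
  have hn2 : n = 2 * (N : ℤ) := by omega
  have hNpos : 0 < N := by omega
  haveI : NeZero N := ⟨by omega⟩
  have hmain : (∃ g : ZMod N ≃+ ZMod N, NegBIso n g) ↔ (∃ u : ZMod N, u * u = -1) := by
    constructor
    · rintro ⟨g, hg⟩
      set u : ZMod N := g 1 with hu
      refine ⟨u, ?_⟩
      have h1 : ((u.val : ℤ) : ZMod N) = g ((1 : ℤ) : ZMod N) := by
        push_cast
        rw [ZMod.natCast_val, ZMod.cast_id, ← hu]
      have hdvd := hg 1 1 (u.val : ℤ) (u.val : ℤ) h1 h1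
      rw [hn2] at hdvd
      have hdvd2 : (N : ℤ) ∣ (u.val : ℤ) * (u.val : ℤ) + 1 * 1 :=
        (mul_dvd_mul_iff_left (by norm_num : (2:ℤ) ≠ 0)).mp hdvd
      have : (((u.val : ℤ) * (u.val : ℤ) + 1 * 1 : ℤ) : ZMod N) = 0 := by
        rwa [ZMod.intCast_zmod_eq_zero_iff_dvd]
      push_cast at this
      rw [ZMod.natCast_val, ZMod.cast_id] at this
      linear_combination this
    · rintro ⟨u, hu⟩
      have hinv : (-u) * u = 1 := by rw [neg_mul, hu, neg_neg]
      refine ⟨{ toFun := fun x => u * x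
                invFun := fun x => (-u) * x
                left_inv := fun x => by show -u * (u * x) = x; rw [← mul_assoc, hinv, one_mul]
                right_inv := fun x => by show u * (-u * x) = x; rw [← mul_assoc, mul_neg, mul_comm u u, hu, neg_neg, one_mul]
                map_add' := fun a b => mul_add u a b }, ?_⟩
      intro x y x' y' hx hy
      simp only [AddEquiv.coe_mk, Equiv.coe_fn_mk] at hx hy
      rw [hn2]
      have : (N : ℤ) ∣ x' * y' + x * y := by
        rw [← ZMod.intCast_zmod_eq_zero_iff_dvd]
        push_cast
        rw [hx, hy]
        linear_combination ((x : ZMod N) * (y : ZMod N)) * hu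
      exact mul_dvd_mul_left 2 this
  refine ⟨hmain.trans ?_, hmain⟩
  rw [aux_neg_one_sq N]
  constructor
  · rintro ⟨h4, hP⟩
    constructor
    · intro h8
      apply h4
      have : (4 : ℤ) ∣ (N : ℤ) := by omega
      exact_mod_cast this
    · intro p hp hp2 hpn
      apply hP p hp hp2
      have hodd : ¬ ((p : ℤ) ∣ 2) := by
        intro h
        have : (p : ℕ) ∣ 2 := by exact_mod_cast h
        exact hp2 ((Nat.prime_dvd_prime_iff_eq hp Nat.prime_two).mp this)
      have hpz : Prime (p : ℤ) := Nat.prime_iff_prime_int.mp hp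
      rw [hn2] at hpn
      rcases hpz.dvd_mul.mp hpn with h | h
      · exact absurd h hodd
      · exact_mod_cast h
  · rintro ⟨h8, hP⟩
    constructor
    · intro h4
      apply h8
      have : (4 : ℤ) ∣ (N : ℤ) := by exact_mod_cast h4
      omega
    · intro p hp hp2 hpN
      apply hP p hp hp2
      rw [hn2]
      exact Dvd.dvd.mul_left (by exact_mod_cast hpN) 2
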